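/- The median Genocchi numbers H_{2n+1} := g_{2n+1,1} (first entries of odd rows of the Seidel triangle) satisfy H_{2n+1} = (-1)^n L(s^n) for all n ≥ 0, where L is the linear functional with L(F_{2k+1}) = [k = 0]. -/

import Mathlib

noncomputable def fibPoly : ℕ → Polynomial ℚ
  | 0 => 0
  | 1 => 1
  | n + 2 => fibPoly (n + 1) + Polynomial.X * fibPoly n

lemma fibPoly_add_two (n : ℕ) :
    fibPoly (n + 2) = fibPoly (n + 1) + Polynomial.X * fibPoly n := rfl

open Polynomial in
lemma fibPoly_deg : ∀ k : ℕ, (fibPoly (2*k+1)).Monic ∧ (fibPoly (2*k+1)).natDegree = k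
    ∧ (fibPoly (2*k+2)).natDegree ≤ k := by
  intro k
  induction k with
  | zero =>
    have h1 : fibPoly 1 = 1 := rfl
    have h2 : fibPoly 2 = 1 := by
      show fibPoly (0+2) = 1
      rw [fibPoly_add_two]; show fibPoly 1 + Polynomial.X * fibPoly 0 = 1
      rw [h1]; show (1 : Polynomial ℚ) + X * 0 = 1; ring
    refine ⟨?_, ?_, ?_⟩ <;> simp [h1, h2, monic_one]
  | succ k ih =>
    obtain ⟨hmon, hdeg, hev⟩ := ih
    have hne : fibPoly (2*k+1) ≠ 0 := hmon.ne_zero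
    have hXmon : (X * fibPoly (2*k+1)).Monic := (monic_X).mul hmon
    have hXdeg : (X * fibPoly (2*k+1)).natDegree = k + 1 := by
      rw [natDegree_mul X_ne_zero hne, natDegree_X, hdeg]; omega
    have e3 : fibPoly (2*(k+1)+1) = fibPoly (2*k+2) + X * fibPoly (2*k+1) := by
      rw [show 2*(k+1)+1 = (2*k+1) + 2 from by omega, fibPoly_add_two]
      try rw [show (2*k+1)+1 = 2*k+2 from by omega]
    have hlt : (fibPoly (2*k+2)).degree < (X * fibPoly (2*k+1)).degree := by
      rcases eq_or_ne (fibPoly (2*k+2)) 0 with h | h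
      · rw [h, degree_zero]
        exact bot_lt_iff_ne_bot.2 (degree_eq_bot.not.2 hXmon.ne_zero)
      · rw [degree_eq_natDegree h, degree_eq_natDegree hXmon.ne_zero, hXdeg]
        exact_mod_cast lt_of_le_of_lt hev (by omega)
    have hmon' : (fibPoly (2*(k+1)+1)).Monic := by
      rw [e3]; exact hXmon.add_of_right hlt
    have hdeg' : (fibPoly (2*(k+1)+1)).natDegree = k + 1 := by
      rw [e3, natDegree_add_eq_right_of_degree_lt hlt, hXdeg]
    refine ⟨hmon', hdeg', ?_⟩
    have e4 : fibPoly (2*(k+1)+2) = fibPoly (2*(k+1)+1) + X * fibPoly (2*k+2) := by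
      rw [show 2*(k+1)+2 = (2*k+2) + 2 from by omega, fibPoly_add_two]
      try rw [show (2*k+2)+1 = 2*(k+1)+1 from by omega]
    rw [e4]
    refine le_trans (natDegree_add_le _ _) ?_
    refine max_le (le_of_eq hdeg') (le_trans (natDegree_mul_le) ?_)
    rw [natDegree_X]; omega

open Polynomial in
lemma fibPoly_span : ∀ (N : ℕ) (p : Polynomial ℚ), p.natDegree ≤ N →
    p ∈ Submodule.span ℚ (Set.range fun k : ℕ => fibPoly (2*k+1)) := by
  intro N
  induction N with
  | zero =>
    intro p hp
    have h1 : fibPoly (2*0+1) = 1 := rfl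
    have : p = (p.coeff 0) • fibPoly (2*0+1) := by
      rw [h1, smul_eq_C_mul, mul_one]
      exact eq_C_of_natDegree_le_zero hp
    rw [this]
    exact Submodule.smul_mem _ _ (Submodule.subset_span ⟨0, rfl⟩)
  | succ N ih =>
    intro p hp
    obtain ⟨hmon, hdeg, -⟩ := fibPoly_deg (N+1)
    set c := p.coeff (N+1) with hc
    set q := p - c • fibPoly (2*(N+1)+1) with hq
    have hqdeg : q.natDegree ≤ N := by
      rw [natDegree_le_iff_coeff_eq_zero]
      intro j hj
      rw [hq, coeff_sub, coeff_smul]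
      rcases eq_or_lt_of_le (Nat.succ_le_of_lt hj) with h | h
      · rw [← h, hc]
        have : (fibPoly (2*(N+1)+1)).coeff (N+1) = 1 := by
          have := hmon.coeff_natDegree
          rwa [hdeg] at this
        rw [this]; simp
      · rw [coeff_eq_zero_of_natDegree_lt (lt_of_le_of_lt hp h),
          coeff_eq_zero_of_natDegree_lt (by rw [hdeg]; exact h)]
        simp
    have : p = q + c • fibPoly (2*(N+1)+1) := by rw [hq]; ring
    rw [this]
    exact Submodule.add_mem _ (ih q hqdeg)
      (Submodule.smul_mem _ _ (Submodule.subset_span ⟨N+1, rfl⟩))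

open Polynomial in
/-- Key lemma: values of any linear functional M with M(Xⁿ) = (-1)ⁿ g(2n+1,1)
on Xⁿ·fibPoly products are Seidel triangle entries. -/
lemma key_lemma (g : ℕ → ℕ → ℚ)
    (h11 : g 1 1 = 1)
    (hzero : ∀ i j : ℕ, j = 0 ∨ (i + 1) / 2 < j → g i j = 0)
    (hodd : ∀ i : ℕ, 1 ≤ i → ∀ j : ℕ, 1 ≤ j → j ≤ i + 1 →
      g (2 * i + 1) j = g (2 * i + 1) (j - 1) + g (2 * i) j)
    (heven : ∀ i : ℕ, 1 ≤ i → ∀ j : ℕ, 1 ≤ j → j ≤ i →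
      g (2 * i) j = g (2 * i) (j + 1) + g (2 * i - 1) j)
    (M : Polynomial ℚ →ₗ[ℚ] ℚ)
    (hMX : ∀ n : ℕ, M (X ^ n) = (-1) ^ n * g (2*n+1) 1) :
    ∀ m : ℕ,
      (∀ n : ℕ, M (X ^ n * fibPoly (2*m+1)) =
        if n + m = 0 then 1 else (-1) ^ (n+m) * g (2*(n+m)) (m+1)) ∧
      (∀ n : ℕ, M (X ^ n * fibPoly (2*m)) = (-1) ^ (n+m+1) * g (2*(n+m)-1) m) := by
  intro m
  induction m with
  | zero =>
    constructor
    · intro n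
      have h1 : fibPoly (2*0+1) = 1 := rfl
      rw [h1, mul_one, hMX n]
      rcases Nat.eq_zero_or_pos n with h | h
      · subst h; simp [h11]
      · have hne : n + 0 ≠ 0 := by omega
        rw [if_neg hne]
        have := hodd n h 1 le_rfl (by omega)
        have hz : g (2*n+1) 0 = 0 := hzero _ 0 (Or.inl rfl)
        simp only [Nat.add_zero]
        rw [this]
        simp [hz]
    · intro n
      have h0 : fibPoly (2*0) = 0 := rfl
      rw [h0, mul_zero, map_zero]
      rw [hzero (2*(n+0)-1) 0 (Or.inl rfl)]
      ring
  | succ m ih =>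
    obtain ⟨ihA, ihB⟩ := ih
    have hBstep : ∀ n : ℕ, M (X ^ n * fibPoly (2*(m+1))) =
        (-1) ^ (n+(m+1)+1) * g (2*(n+(m+1))-1) (m+1) := by
      intro n
      have e : fibPoly (2*(m+1)) = fibPoly (2*m+1) + X * fibPoly (2*m) := by
        rw [show 2*(m+1) = (2*m) + 2 from by omega, fibPoly_add_two]
        try rw [show (2*m)+1 = 2*m+1 from by omega]
      have expand : X ^ n * fibPoly (2*(m+1)) =
          X ^ n * fibPoly (2*m+1) + X ^ (n+1) * fibPoly (2*m) := by
        rw [e]; ring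
      rw [expand, map_add, ihA n, ihB (n+1)]
      rcases Nat.eq_zero_or_pos (n + m) with h | h
      · have hn : n = 0 := by omega
        have hm : m = 0 := by omega
        subst hn; subst hm
        have hz : g 1 0 = 0 := hzero 1 0 (Or.inl rfl)
        norm_num [h11, hz]
      · rw [if_neg (by omega)]
        have idx1 : 2*((n+1)+m)-1 = 2*(n+m)+1 := by omega
        have idx2 : 2*(n+(m+1))-1 = 2*(n+m)+1 := by omega
        rw [idx1, idx2]
        have hrec := hodd (n+m) h (m+1) (by omega) (by omega)
        simp only [Nat.add_sub_cancel] at hrec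
        rw [hrec]
        have s1 : ((-1:ℚ)) ^ ((n+1)+m+1) = (-1) ^ (n+m) := by
          have : (n+1)+m+1 = (n+m) + 2 := by omega
          rw [this, pow_add]; ring
        have s2 : ((-1:ℚ)) ^ (n+(m+1)+1) = (-1) ^ (n+m) := by
          have : n+(m+1)+1 = (n+m) + 2 := by omega
          rw [this, pow_add]; ring
        rw [s1, s2]
        ring
    refine ⟨?_, hBstep⟩
    intro n
    have e : fibPoly (2*(m+1)+1) = fibPoly (2*(m+1)) + X * fibPoly (2*m+1) := by
      rw [show 2*(m+1)+1 = (2*m+1) + 2 from by omega, fibPoly_add_two]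
      try rw [show (2*m+1)+1 = 2*(m+1) from by omega]
    have expand : X ^ n * fibPoly (2*(m+1)+1) =
        X ^ n * fibPoly (2*(m+1)) + X ^ (n+1) * fibPoly (2*m+1) := by
      rw [e]; ring
    rw [expand, map_add, hBstep n, ihA (n+1)]
    rw [if_neg (by omega), if_neg (by omega)]
    have idx4 : n+(m+1) = n+m+1 := by omega
    rw [idx4]
    have idx2 : (n+1)+m = n+m+1 := by omega
    rw [idx2]
    have hrec := heven (n+m+1) (by omega) (m+1) (by omega) (by omega)
    have idx5 : 2*(n+m+1) - 1 = 2*(n+m)+1 := by omega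
    rw [idx5] at hrec ⊢
    rw [hrec]
    have s1 : ((-1:ℚ)) ^ (n+m+1+1) = -(-1) ^ (n+m+1) := by
      rw [pow_succ]; ring
    rw [s1]
    ring

/-- The median Genocchi numbers H_(2n+1) = g_(2n+1,1) satisfy H_(2n+1) = (-1)^n L(s^n). -/
theorem stmt11 (g : ℕ → ℕ → ℚ)
    (h11 : g 1 1 = 1) (h21 : g 2 1 = 1)
    (hzero : ∀ i j : ℕ, j = 0 ∨ (i + 1) / 2 < j → g i j = 0)
    (hodd : ∀ i : ℕ, 1 ≤ i → ∀ j : ℕ, 1 ≤ j → j ≤ i + 1 →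
      g (2 * i + 1) j = g (2 * i + 1) (j - 1) + g (2 * i) j)
    (heven : ∀ i : ℕ, 1 ≤ i → ∀ j : ℕ, 1 ≤ j → j ≤ i →
      g (2 * i) j = g (2 * i) (j + 1) + g (2 * i - 1) j)
    (L : Polynomial ℚ →ₗ[ℚ] ℚ)
    (hL : ∀ k : ℕ, L (fibPoly (2 * k + 1)) = if k = 0 then 1 else 0)
    (n : ℕ) :
    g (2 * n + 1) 1 = (-1) ^ n * L (Polynomial.X ^ n) := by
  classical
  -- construct the concrete functional M
  set w : ℕ → ℚ := fun j => (-1) ^ j * g (2*j+1) 1 with hw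
  set M : Polynomial ℚ →ₗ[ℚ] ℚ :=
    { toFun := fun p => Finsupp.linearCombination ℚ w p.toFinsupp.coeff
      map_add' := by intro p q; simp [Polynomial.toFinsupp_add, AddMonoidAlgebra.coeff_add]
      map_smul' := by intro c p; simp [Polynomial.toFinsupp_smul, AddMonoidAlgebra.coeff_smul] } with hM
  have hMX : ∀ k : ℕ, M (Polynomial.X ^ k) = (-1) ^ k * g (2*k+1) 1 := by
    intro k
    show Finsupp.linearCombination ℚ w (Polynomial.X ^ k : Polynomial ℚ).toFinsupp.coeff = _
    rw [Polynomial.X_pow_eq_monomial, Polynomial.toFinsupp_monomial, AddMonoidAlgebra.coeff_single, Finsupp.linearCombination_single,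
      one_smul]
  have key := key_lemma g h11 hzero hodd heven M hMX
  -- M agrees with L on the odd fibPolys
  have hMfib : ∀ k : ℕ, M (fibPoly (2*k+1)) = if k = 0 then 1 else 0 := by
    intro k
    have := (key k).1 0
    rw [pow_zero, one_mul] at this
    rcases Nat.eq_zero_or_pos k with h | h
    · subst h; simpa using this
    · rw [if_neg (by omega)] at this
      rw [if_neg (by omega)]
      rw [this]
      have : g (2*(0+k)) (k+1) = 0 := by
        apply hzero
        right
        omega
      rw [this]; ring
  have hspan : ∀ p : Polynomial ℚ,
      p ∈ Submodule.span ℚ (Set.range fun k : ℕ => fibPoly (2*k+1)) :=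
    fun p => fibPoly_span p.natDegree p le_rfl
  have hEq : Set.EqOn (⇑L) (⇑M) (Set.range fun k : ℕ => fibPoly (2*k+1)) := by
    rintro x ⟨k, rfl⟩
    rw [hL k, hMfib k]
  have hLM : L (Polynomial.X ^ n) = M (Polynomial.X ^ n) :=
    LinearMap.eqOn_span hEq (hspan _)
  rw [hLM, hMX n]
  rw [← mul_assoc, ← mul_pow]
  norm_num
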